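/- Suppose α, β, γ, δ, σ > 0 and γδ ≤ ασ. Let (x, y) : [0,∞) → ℝ² be a differentiable solution of ẋ = δ − αx − βxy, ẏ = γxy − σy with x(0) > 0 and y(0) > 0. Then (x(t), y(t)) → (δ/α, 0) as t → ∞; i.e., the open first quadrant is a domain of attraction of the predator-extinction equilibrium (δ/α, 0). -/

import Mathlib

open Filter Set

private lemma aux_mono {f d : ℝ → ℝ} {a b : ℝ} (hab : a ≤ b)
    (hf : ∀ t ∈ Set.Icc a b, HasDerivAt f (d t) t)
    (hd : ∀ t ∈ Set.Ioo a b, 0 ≤ d t) : f a ≤ f b := by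
  have hc : ContinuousOn f (Set.Icc a b) := fun t ht =>
    (hf t ht).continuousAt.continuousWithinAt
  have hdiff : DifferentiableOn ℝ f (interior (Set.Icc a b)) := by
    rw [interior_Icc]
    exact fun t ht =>
      ((hf t (Set.Ioo_subset_Icc_self ht)).differentiableAt).differentiableWithinAt
  have hmono := monotoneOn_of_deriv_nonneg (convex_Icc a b) hc hdiff (fun t ht => by
    rw [interior_Icc] at ht
    rw [(hf t (Set.Ioo_subset_Icc_self ht)).deriv]
    exact hd t ht)
  exact hmono (Set.left_mem_Icc.2 hab) (Set.right_mem_Icc.2 hab) hab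

private lemma aux_anti {f d : ℝ → ℝ} {a b : ℝ} (hab : a ≤ b)
    (hf : ∀ t ∈ Set.Icc a b, HasDerivAt f (d t) t)
    (hd : ∀ t ∈ Set.Ioo a b, d t ≤ 0) : f b ≤ f a := by
  have := aux_mono (f := fun t => -f t) (d := fun t => -d t) hab
    (fun t ht => (hf t ht).neg) (fun t ht => neg_nonneg.2 (hd t ht))
  simpa using this

private lemma aux_deriv_eq (α β γ δ σ X Yv : ℝ) (hα : α ≠ 0) (hX : X ≠ 0) :
    -(α * γ * ((X - δ / α) ^ 2 / X)) - β * (σ - γ * δ / α) * Yv =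
    γ * (δ - α * X - β * X * Yv - δ / α * ((δ - α * X - β * X * Yv) / X)) +
      β * (γ * X * Yv - σ * Yv) := by
  field_simp
  ring

private lemma aux_mul_div (a b : ℝ) (ha : a ≠ 0) : a * (b / a - 1) = b - a := by
  field_simp

set_option maxHeartbeats 1000000 in
theorem damped_pp_predator_extinction
    (α β γ δ σ : ℝ)
    (hα : 0 < α) (hβ : 0 < β) (hγ : 0 < γ) (hδ : 0 < δ) (hσ : 0 < σ)
    (hR : γ * δ ≤ α * σ)
    (x y : ℝ → ℝ)
    (hx : ∀ t, 0 ≤ t → HasDerivAt x (δ - α * x t - β * x t * y t) t)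
    (hy : ∀ t, 0 ≤ t → HasDerivAt y (γ * x t * y t - σ * y t) t)
    (hx0 : 0 < x 0) (hy0 : 0 < y 0) :
    Tendsto (fun t => (x t, y t)) atTop (nhds (δ / α, 0)) := by
  -- continuity on compact intervals starting at nonneg points
  have hxc : ∀ {a b : ℝ}, 0 ≤ a → ContinuousOn x (Set.Icc a b) :=
    fun {a b} ha t ht => (hx t (ha.trans ht.1)).continuousAt.continuousWithinAt
  have hyc : ∀ {a b : ℝ}, 0 ≤ a → ContinuousOn y (Set.Icc a b) :=
    fun {a b} ha t ht => (hy t (ha.trans ht.1)).continuousAt.continuousWithinAt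
  -- Step 1 : positivity
  have hpos : ∀ t, 0 ≤ t → 0 < x t ∧ 0 < y t := by
    intro T hT
    by_contra hcon
    rw [not_and_or] at hcon
    push_neg at hcon
    set f : ℝ → ℝ := fun t => min (x t) (y t) with hfdef
    have hfc : ContinuousOn f (Set.Icc 0 T) := (hxc le_rfl).inf (hyc le_rfl)
    set S : Set ℝ := Set.Icc 0 T ∩ f ⁻¹' Set.Iic 0 with hSdef
    have hTS : T ∈ S := by
      refine ⟨Set.right_mem_Icc.2 hT, ?_⟩
      simp only [Set.mem_preimage, Set.mem_Iic, hfdef]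
      rcases hcon with h | h
      · exact le_trans (min_le_left _ _) h
      · exact le_trans (min_le_right _ _) h
    have hSclosed : IsClosed S := hfc.preimage_isClosed_of_isClosed isClosed_Icc isClosed_Iic
    have hSbdd : BddBelow S := ⟨0, fun t ht => ht.1.1⟩
    set t₀ : ℝ := sInf S with ht₀def
    have ht₀S : t₀ ∈ S := hSclosed.csInf_mem ⟨T, hTS⟩ hSbdd
    have ht₀0 : 0 ≤ t₀ := ht₀S.1.1
    have ht₀T : t₀ ≤ T := ht₀S.1.2
    have hf0 : 0 < f 0 := lt_min hx0 hy0
    have ht₀pos : 0 < t₀ := by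
      rcases lt_or_eq_of_le ht₀0 with h | h
      · exact h
      · exfalso; rw [← h] at ht₀S; exact absurd ht₀S.2 (not_le.2 hf0)
    have hfpos : ∀ t, 0 ≤ t → t < t₀ → 0 < x t ∧ 0 < y t := by
      intro t ht htlt
      by_contra h
      rw [not_and_or] at h; push_neg at h
      have htS : t ∈ S := by
        refine ⟨⟨ht, le_trans htlt.le ht₀T⟩, ?_⟩
        simp only [Set.mem_preimage, Set.mem_Iic, hfdef]
        rcases h with h | h
        · exact le_trans (min_le_left _ _) h
        · exact le_trans (min_le_right _ _) h
      exact absurd (csInf_le hSbdd htS) (not_le.2 htlt)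
    -- bound on [0,t₀]
    obtain ⟨u, hu, hmax'⟩ := (isCompact_Icc (a := (0:ℝ)) (b := t₀)).exists_isMaxOn
      ⟨0, Set.left_mem_Icc.2 ht₀0⟩
      (((hxc le_rfl).sup (hyc le_rfl)) : ContinuousOn (fun t => max (x t) (y t)) _)
    have hmax := isMaxOn_iff.mp hmax'
    set C : ℝ := max (max (x u) (y u)) 0 with hCdef
    have hC0 : 0 ≤ C := le_max_right _ _
    have hxleC : ∀ t ∈ Set.Icc (0:ℝ) t₀, x t ≤ C := fun t ht =>
      le_trans (le_trans (le_max_left _ _) (hmax t ht)) (le_max_left _ _)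
    have hyleC : ∀ t ∈ Set.Icc (0:ℝ) t₀, y t ≤ C := fun t ht =>
      le_trans (le_trans (le_max_right _ _) (hmax t ht)) (le_max_left _ _)
    set K : ℝ := α + σ + β * C + γ * C with hKdef
    -- x t₀ > 0
    have hgx : ∀ t ∈ Set.Icc (0:ℝ) t₀, HasDerivAt (fun s => x s * Real.exp (K * s))
        (((δ - α * x t - β * x t * y t) + K * x t) * Real.exp (K * t)) t := by
      intro t ht
      have h1 := (hx t ht.1).mul (((hasDerivAt_id t).const_mul K).exp)
      simp only [id_eq, mul_one] at h1
      refine h1.congr_deriv (Eq.symm ?_)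
      ring
    have hxt₀ : 0 < x t₀ := by
      have hle := aux_mono ht₀0 hgx (fun t ht => by
        have h1 := (hfpos t ht.1.le ht.2).1
        have h2 := (hfpos t ht.1.le ht.2).2
        have h3 := hyleC t (Set.mem_Icc.2 ⟨ht.1.le, ht.2.le⟩)
        have he := (Real.exp_pos (K * t)).le
        have : 0 ≤ (δ - α * x t - β * x t * y t) + K * x t := by
          have : (δ - α * x t - β * x t * y t) + K * x t
              = δ + x t * (σ + γ * C + β * (C - y t)) := by rw [hKdef]; ring
          rw [this]
          have := mul_nonneg h1.le (by nlinarith [mul_nonneg hβ.le (sub_nonneg.2 h3)] :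
            (0:ℝ) ≤ σ + γ * C + β * (C - y t))
          linarith
        exact mul_nonneg this he)
      simp only [mul_zero, Real.exp_zero, mul_one] at hle
      nlinarith [Real.exp_pos (K * t₀)]
    -- y t₀ > 0
    have hgy : ∀ t ∈ Set.Icc (0:ℝ) t₀, HasDerivAt (fun s => y s * Real.exp (K * s))
        (((γ * x t * y t - σ * y t) + K * y t) * Real.exp (K * t)) t := by
      intro t ht
      have h1 := (hy t ht.1).mul (((hasDerivAt_id t).const_mul K).exp)
      simp only [id_eq, mul_one] at h1
      refine h1.congr_deriv (Eq.symm ?_)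
      ring
    have hyt₀ : 0 < y t₀ := by
      have hle := aux_mono ht₀0 hgy (fun t ht => by
        have h1 := (hfpos t ht.1.le ht.2).1
        have h2 := (hfpos t ht.1.le ht.2).2
        have he := (Real.exp_pos (K * t)).le
        have : 0 ≤ (γ * x t * y t - σ * y t) + K * y t := by
          have : (γ * x t * y t - σ * y t) + K * y t
              = y t * (γ * x t + α + β * C + γ * C) := by rw [hKdef]; ring
          rw [this]
          have hb1 := mul_nonneg hγ.le h1.le
          have hb2 := mul_nonneg hβ.le hC0
          have hb3 := mul_nonneg hγ.le hC0
          exact mul_nonneg h2.le (by nlinarith)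
        exact mul_nonneg this he)
      simp only [mul_zero, Real.exp_zero, mul_one] at hle
      nlinarith [Real.exp_pos (K * t₀)]
    have : 0 < f t₀ := lt_min hxt₀ hyt₀
    exact absurd ht₀S.2 (not_le.2 this)
  -- Step 2 : upper bound  γ x + β y ≤ B
  set c : ℝ := min α σ with hcdef
  have hc : 0 < c := lt_min hα hσ
  set B : ℝ := max (γ * x 0 + β * y 0) (γ * δ / c) with hBdef
  have hVB : ∀ t, 0 ≤ t → γ * x t + β * y t ≤ B := by
    intro T hT
    have hW : ∀ t ∈ Set.Icc (0:ℝ) T, HasDerivAt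
        (fun s => (γ * x s + β * y s - γ * δ / c) * Real.exp (c * s))
        ((γ * (x t * (c - α)) + β * (y t * (c - σ))) * Real.exp (c * t)) t := by
      intro t ht
      have h1 := ((((hx t ht.1).const_mul γ).add ((hy t ht.1).const_mul β)).sub_const
        (γ * δ / c)).mul (((hasDerivAt_id t).const_mul c).exp)
      simp only [id_eq, mul_one, Pi.add_apply] at h1
      refine h1.congr_deriv (Eq.symm ?_)
      have hcc : c * (γ * δ / c) = γ * δ := by field_simp
      linear_combination Real.exp (c * t) * hcc
    have hle := aux_anti hT hW (fun t ht => by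
      have h1 := (hpos t ht.1.le).1
      have h2 := (hpos t ht.1.le).2
      have he := (Real.exp_pos (c * t)).le
      have hca : c ≤ α := min_le_left _ _
      have hcs : c ≤ σ := min_le_right _ _
      have : γ * (x t * (c - α)) + β * (y t * (c - σ)) ≤ 0 := by
        nlinarith [mul_nonneg hγ.le h1.le, mul_nonneg hβ.le h2.le]
      exact mul_nonpos_of_nonpos_of_nonneg this he)
    simp only [mul_zero, Real.exp_zero, mul_one] at hle
    have he1 : (1:ℝ) ≤ Real.exp (c * T) := Real.one_le_exp (by positivity)
    rcases le_or_gt (γ * x T + β * y T) (γ * δ / c) with h | h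
    · exact le_trans h (le_max_right _ _)
    · have h2 : γ * x T + β * y T - γ * δ / c
          ≤ (γ * x T + β * y T - γ * δ / c) * Real.exp (c * T) := by nlinarith
      have := le_max_left (γ * x 0 + β * y 0) (γ * δ / c)
      linarith
  have hB : 0 < B := lt_of_lt_of_le (by positivity) (le_max_right _ _)
  set M : ℝ := B / γ with hMdef
  set Y : ℝ := B / β with hYdef
  have hM : 0 < M := by positivity
  have hY : 0 < Y := by positivity
  have hxM : ∀ t, 0 ≤ t → x t ≤ M := by
    intro t ht
    have h1 := hVB t ht
    have h2 := (hpos t ht).2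
    rw [hMdef, le_div_iff₀ hγ]
    nlinarith [mul_pos hβ h2]
  have hyY : ∀ t, 0 ≤ t → y t ≤ Y := by
    intro t ht
    have h1 := hVB t ht
    have h2 := (hpos t ht).1
    rw [hYdef, le_div_iff₀ hβ]
    nlinarith [mul_pos hγ h2]
  -- Step 3 : lower bound on x
  set K₁ : ℝ := α + β * Y with hK₁def
  have hK₁ : 0 < K₁ := by positivity
  set m : ℝ := min (x 0) (δ / K₁) with hmdef
  have hm0 : 0 < m := lt_min hx0 (by positivity)
  have hxm : ∀ t, 0 ≤ t → m ≤ x t := by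
    intro T hT
    have hU : ∀ t ∈ Set.Icc (0:ℝ) T, HasDerivAt
        (fun s => (x s - δ / K₁) * Real.exp (K₁ * s))
        ((x t * (K₁ - α - β * y t)) * Real.exp (K₁ * t)) t := by
      intro t ht
      have h1 := ((hx t ht.1).sub_const (δ / K₁)).mul (((hasDerivAt_id t).const_mul K₁).exp)
      simp only [id_eq, mul_one] at h1
      refine h1.congr_deriv (Eq.symm ?_)
      have hkk : K₁ * (δ / K₁) = δ := by field_simp
      linear_combination Real.exp (K₁ * t) * hkk
    have hle := aux_mono hT hU (fun t ht => by
      have h1 := (hpos t ht.1.le).1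
      have h2 := hyY t ht.1.le
      have he := (Real.exp_pos (K₁ * t)).le
      have : 0 ≤ x t * (K₁ - α - β * y t) := by
        refine mul_nonneg h1.le ?_
        have : K₁ - α - β * y t = β * (Y - y t) := by rw [hK₁def]; ring
        rw [this]
        exact mul_nonneg hβ.le (sub_nonneg.2 h2)
      exact mul_nonneg this he)
    simp only [mul_zero, Real.exp_zero, mul_one] at hle
    have he1 : (1:ℝ) ≤ Real.exp (K₁ * T) := Real.one_le_exp (by positivity)
    rcases le_or_gt (δ / K₁) (x T) with h | h
    · exact le_trans (min_le_right _ _) h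
    · have h2 : (x T - δ / K₁) * Real.exp (K₁ * T) ≤ x T - δ / K₁ := by nlinarith
      have := min_le_left (x 0) (δ / K₁)
      linarith
  clear_value c B M Y K₁ m
  -- Step 4 : Lyapunov function
  set xbar : ℝ := δ / α with hxbardef
  have hxbar : 0 < xbar := by positivity
  set L : ℝ → ℝ := fun t => γ * (x t - xbar * Real.log (x t)) + β * y t with hLdef
  set D : ℝ → ℝ := fun t => -(α * γ * ((x t - xbar) ^ 2 / x t)) - (β * (σ - γ * δ / α)) * y t
    with hDdef
  have hσγ : 0 ≤ σ - γ * δ / α := by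
    rw [sub_nonneg, div_le_iff₀ hα]
    linarith
  clear_value xbar L D
  have hL : ∀ t, 0 ≤ t → HasDerivAt L (D t) t := by
    intro t ht
    have hxne : x t ≠ 0 := (hpos t ht).1.ne'
    have h1 := (((hx t ht).sub (((hx t ht).log hxne).const_mul xbar)).const_mul γ).add
      ((hy t ht).const_mul β)
    simp only [hLdef, hDdef, hxbardef]
    simp only [hxbardef] at h1
    refine h1.congr_deriv (Eq.symm ?_)
    exact aux_deriv_eq α β γ δ σ (x t) (y t) hα.ne' hxne
  have hDnonpos : ∀ t, 0 ≤ t → D t ≤ 0 := by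
    intro t ht
    have hxp := (hpos t ht).1
    have hyp := (hpos t ht).2
    have h1 : 0 ≤ α * γ * ((x t - xbar) ^ 2 / x t) :=
      mul_nonneg (by positivity) (div_nonneg (sq_nonneg _) hxp.le)
    have h2 : 0 ≤ β * (σ - γ * δ / α) * y t :=
      mul_nonneg (mul_nonneg hβ.le hσγ) hyp.le
    simp only [hDdef]
    linarith
  have hLanti : ∀ s t, 0 ≤ s → s ≤ t → L t ≤ L s := by
    intro s t hs hst
    exact aux_anti hst (fun u hu => hL u (hs.trans hu.1))
      (fun u hu => hDnonpos u (hs.trans hu.1.le))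
  have hLlb : ∀ t, 0 ≤ t → γ * (xbar - xbar * Real.log xbar) ≤ L t := by
    intro t ht
    have hxp := (hpos t ht).1
    have hyp := (hpos t ht).2
    have hlog : Real.log (x t / xbar) ≤ x t / xbar - 1 :=
      Real.log_le_sub_one_of_pos (by positivity)
    rw [Real.log_div hxp.ne' hxbar.ne'] at hlog
    have hkey : xbar * (Real.log (x t) - Real.log xbar) ≤ x t - xbar := by
      have h2 : xbar * (x t / xbar - 1) = x t - xbar := aux_mul_div _ _ hxbar.ne'
      nlinarith [mul_le_mul_of_nonneg_left hlog hxbar.le]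
    simp only [hLdef]
    nlinarith [mul_pos hβ hyp, mul_nonneg hγ.le (sub_nonneg.2 hkey)]
  set Lt : ℝ → ℝ := fun t => L (max t 0) with hLtdef
  have hanti : Antitone Lt := fun s t hst =>
    hLanti _ _ (le_max_right s 0) (max_le_max hst le_rfl)
  have hbdd : BddBelow (Set.range Lt) := by
    refine ⟨γ * (xbar - xbar * Real.log xbar), ?_⟩
    rintro _ ⟨t, rfl⟩
    exact hLlb _ (le_max_right _ _)
  set Linf : ℝ := ⨅ t, Lt t with hLinfdef
  have hLtend : Tendsto L atTop (nhds Linf) := by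
    refine (tendsto_atTop_ciInf hanti hbdd).congr' ?_
    filter_upwards [eventually_ge_atTop (0:ℝ)] with t ht
    simp only [hLtdef, max_eq_left ht]
  -- Step 5 : x → xbar
  set Kd : ℝ := δ + α * M + β * M * Y + 1 with hKddef
  have hKd : 0 < Kd := by positivity
  have hKdb : ∀ t, 0 ≤ t → |δ - α * x t - β * x t * y t| ≤ Kd := by
    intro t ht
    have h1 := (hpos t ht).1
    have h2 := (hpos t ht).2
    have h3 := hxM t ht
    have h4 := hyY t ht
    have h5 : x t * y t ≤ M * Y := mul_le_mul h3 h4 h2.le hM.le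
    rw [abs_le]
    constructor
    · simp only [hKddef]; nlinarith
    · simp only [hKddef]; nlinarith [mul_pos hα h1, mul_pos (mul_pos hβ h1) h2]
  have hxtend : Tendsto x atTop (nhds xbar) := by
    rw [Metric.tendsto_atTop]
    by_contra hcon
    push_neg at hcon
    obtain ⟨ε, hε, hbad⟩ := hcon
    set ℓ : ℝ := ε / (2 * Kd) with hℓdef
    have hℓ : 0 < ℓ := by positivity
    set ρ : ℝ := α * γ * ((ε / 2) ^ 2 / M) with hρdef
    have hρ : 0 < ρ := by positivity
    clear_value Kd ℓ ρ
    obtain ⟨N₀, hN₀⟩ := Metric.tendsto_atTop.mp hLtend (ρ * ℓ / 3) (by positivity)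
    obtain ⟨t₁, ht₁N, ht₁⟩ := hbad (max N₀ 0)
    have ht₁0 : 0 ≤ t₁ := le_trans (le_max_right _ _) ht₁N
    have ht₁N₀ : N₀ ≤ t₁ := le_trans (le_max_left _ _) ht₁N
    have hxdev : ∀ s ∈ Set.Icc t₁ (t₁ + ℓ), ε / 2 ≤ |x s - xbar| := by
      intro s hs
      have hmvt := (convex_Icc t₁ (t₁ + ℓ)).norm_image_sub_le_of_norm_hasDerivWithin_le
        (f := x) (f' := fun u => δ - α * x u - β * x u * y u)
        (fun u hu => (hx u (ht₁0.trans hu.1)).hasDerivWithinAt)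
        (fun u hu => by rw [Real.norm_eq_abs]; exact hKdb u (ht₁0.trans hu.1))
        (Set.left_mem_Icc.2 (by linarith)) hs
      rw [Real.norm_eq_abs, Real.norm_eq_abs] at hmvt
      have h1 : |s - t₁| ≤ ℓ := by
        rw [abs_of_nonneg (by linarith [hs.1])]
        linarith [hs.2]
      have h2 : |x s - x t₁| ≤ Kd * ℓ := le_trans hmvt (mul_le_mul_of_nonneg_left h1 hKd.le)
      have h3 : Kd * ℓ = ε / 2 := by
        rw [hℓdef]; field_simp
      have h4 : ε ≤ |x t₁ - xbar| := by rwa [Real.dist_eq] at ht₁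
      have h5 := abs_sub_abs_le_abs_sub (x t₁ - xbar) (x s - xbar)
      have h6 : |x t₁ - xbar - (x s - xbar)| = |x s - x t₁| := by
        rw [← abs_neg]; congr 1; ring
      rw [h6] at h5
      linarith
    have hdec : L (t₁ + ℓ) + ρ * (t₁ + ℓ) ≤ L t₁ + ρ * t₁ := by
      refine aux_anti (f := fun s => L s + ρ * s) (d := fun s => D s + ρ)
        (by linarith) (fun s hs => ?_) (fun s hs => ?_)
      · exact ((hL s (ht₁0.trans hs.1)).add ((hasDerivAt_id s).const_mul ρ)).congr_deriv (by simp)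
      · have hs0 : 0 ≤ s := ht₁0.trans hs.1.le
        have hxs := (hpos s hs0).1
        have hMs := hxM s hs0
        have hys := (hpos s hs0).2
        have hdev := hxdev s (Set.mem_Icc.2 ⟨hs.1.le, hs.2.le⟩)
        have hsq : (ε / 2) ^ 2 ≤ (x s - xbar) ^ 2 := by
          have h7 := sq_abs (x s - xbar)
          nlinarith [abs_nonneg (x s - xbar)]
        have hdiv : (ε / 2) ^ 2 / M ≤ (x s - xbar) ^ 2 / x s :=
          div_le_div₀ (sq_nonneg _) hsq hxs hMs
        have h8 : ρ ≤ α * γ * ((x s - xbar) ^ 2 / x s) := by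
          rw [hρdef]
          exact mul_le_mul_of_nonneg_left hdiv (by positivity)
        have h9 : 0 ≤ β * (σ - γ * δ / α) * y s :=
          mul_nonneg (mul_nonneg hβ.le hσγ) hys.le
        simp only [hDdef]
        linarith
    have hA := hN₀ t₁ ht₁N₀
    have hB2 := hN₀ (t₁ + ℓ) (by linarith)
    rw [Real.dist_eq] at hA hB2
    have h10 := abs_lt.mp hA
    have h11 := abs_lt.mp hB2
    nlinarith [hdec, hρ, hℓ]
  -- Step 6 : y converges, and its limit is 0
  have hlogt : Tendsto (fun t => Real.log (x t)) atTop (nhds (Real.log xbar)) :=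
    ((Real.continuousAt_log hxbar.ne').tendsto).comp hxtend
  set ybar : ℝ := (Linf - γ * (xbar - xbar * Real.log xbar)) / β with hybardef
  have hyt : Tendsto y atTop (nhds ybar) := by
    have h1 : Tendsto (fun t => (L t - γ * (x t - xbar * Real.log (x t))) / β) atTop
        (nhds ybar) :=
      (hLtend.sub ((hxtend.sub (hlogt.const_mul xbar)).const_mul γ)).div_const β
    refine h1.congr (fun t => ?_)
    simp only [hLdef]
    rw [add_sub_cancel_left, mul_div_cancel_left₀ _ hβ.ne']
  have hybar0 : 0 ≤ ybar := by
    refine ge_of_tendsto hyt ?_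
    filter_upwards [eventually_ge_atTop (0:ℝ)] with t ht
    exact (hpos t ht).2.le
  have hybar : ybar = 0 := by
    by_contra hne
    have hypos : 0 < ybar := lt_of_le_of_ne hybar0 (Ne.symm hne)
    set c₂ : ℝ := β * xbar * ybar / 2 with hc₂def
    have hc₂ : 0 < c₂ := by positivity
    have hxd : Tendsto (fun t => δ - α * x t - β * x t * y t) atTop (nhds (-(2 * c₂))) := by
      have h1 := (tendsto_const_nhds (x := δ) (f := atTop)).sub (hxtend.const_mul α)
      have h2 := (hxtend.mul hyt).const_mul β
      have h3 := h1.sub h2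
      have h4 : δ - α * xbar - β * (xbar * ybar) = -(2 * c₂) := by
        rw [hc₂def, hxbardef]
        field_simp [hα.ne']
        ring
      rw [h4] at h3
      exact h3.congr (fun t => by ring)
    have hev : ∀ᶠ t in atTop, δ - α * x t - β * x t * y t < -c₂ ∧ 0 ≤ t := by
      refine (hxd.eventually (eventually_lt_nhds ?_)).and (eventually_ge_atTop 0)
      linarith
    obtain ⟨N, hN⟩ := eventually_atTop.mp hev
    set N₁ : ℝ := max N 0 with hN₁def
    have hN₁0 : 0 ≤ N₁ := le_max_right _ _
    set T : ℝ := N₁ + (x N₁ - m + 1) / c₂ with hTdef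
    have hxN₁m : m ≤ x N₁ := hxm N₁ hN₁0
    have hTN₁ : N₁ ≤ T := by
      rw [hTdef]
      have : 0 ≤ (x N₁ - m + 1) / c₂ := div_nonneg (by linarith) hc₂.le
      linarith
    have hdec : x T + c₂ * T ≤ x N₁ + c₂ * N₁ := by
      refine aux_anti (f := fun s => x s + c₂ * s)
        (d := fun s => (δ - α * x s - β * x s * y s) + c₂) hTN₁ (fun s hs => ?_)
        (fun s hs => ?_)
      · exact ((hx s (hN₁0.trans hs.1)).add ((hasDerivAt_id s).const_mul c₂)).congr_deriv (by simp)
      · have := (hN s (le_trans (le_max_left N 0) hs.1.le)).1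
        show δ - α * x s - β * x s * y s + c₂ ≤ 0
        linarith
    have hc₂T : c₂ * (T - N₁) = x N₁ - m + 1 := by
      rw [hTdef]
      field_simp
      ring
    have hxT : x T ≤ m - 1 := by linarith
    have := hxm T (hN₁0.trans hTN₁)
    linarith
  exact hxtend.prodMk_nhds (hybar ▸ hyt)
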